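/- If statement (b) is true at all meaningful event times up to time t_m, then no agent of P(n) that is settled or slow at time t_m moves or is deleted as a result of the event of S scheduled for time t_m (i.e., such agents still exist and occupy the same vertex at time t_{m+1}). -/
import Mathlib


/-!
Model of Amir–Bruckstein "Fast Uniform Dispersion of a Crash-prone Swarm".

Agents are indexed by a type `A` (usually `ℕ`, agent `i` standing for `A_{i+1}`).
An execution is driven by an `EventOrder`: a sequence of events, each being the
activation or the deletion of a specified agent, at strictly increasing real times.
`cfg k` is the configuration before the `k`-th event.
-/

inductive AgentState (V : Type) where
  | outside : AgentState V
  | mobile (v : V) : AgentState V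
  | settled (v : V) (mark : Option V) : AgentState V
  | deleted : AgentState V

/-- The vertex occupied by an agent in a given state, if any. -/
def AgentState.pos {V : Type} : AgentState V → Option V
  | .outside => none
  | .mobile v => some v
  | .settled v _ => some v
  | .deleted => none

/-- A configuration: the state of each agent. -/
abbrev Config (A V : Type) := A → AgentState V

/-- Some settled agent occupies `v`. -/
def settledAt {A V : Type} (c : Config A V) (v : V) : Prop :=
  ∃ i m, c i = AgentState.settled v m

/-- Some mobile agent occupies `v`. -/
def mobileAt {A V : Type} (c : Config A V) (v : V) : Prop :=
  ∃ i, c i = AgentState.mobile v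

/-- The vertex `v` is empty. -/
def emptyAt {A V : Type} (c : Config A V) (v : V) : Prop :=
  ¬ settledAt c v ∧ ¬ mobileAt c v

/-- Vertex `u` contains exactly one agent: a settled agent marking `v`. -/
def soleSettledMarking {A V : Type} (c : Config A V) (u v : V) : Prop :=
  (∃ i, c i = AgentState.settled u (some v)) ∧ ¬ mobileAt c u

/-- A mobile agent at `v` has some vertex it could move to, per the local rule. -/
def canMoveFrom {A V : Type} (G : SimpleGraph V) (c : Config A V) (v : V) : Prop :=
  ∃ u, G.Adj v u ∧ (soleSettledMarking c u v ∨ emptyAt c u)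

/-- An outside agent `i` may enter the source `s`: all lower-indexed agents have
entered or been deleted, and `s` holds no mobile agent. -/
def canEnter {V : Type} (c : Config ℕ V) (s : V) (i : ℕ) : Prop :=
  (∀ j < i, c j ≠ AgentState.outside) ∧ ¬ mobileAt c s

/-- Each vertex holds at most one settled and at most one mobile agent. -/
def Capacity {A V : Type} (c : Config A V) : Prop :=
  (∀ v (i j : A) mi mj, c i = AgentState.settled v mi → c j = AgentState.settled v mj → i = j) ∧
  (∀ v (i j : A), c i = AgentState.mobile v → c j = AgentState.mobile v → i = j)

/-- An event: at `time`, the agent `agent` is activated (`isDel = false`) or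
activated-and-deleted (`isDel = true`). -/
structure Event where
  time : ℝ
  agent : ℕ
  isDel : Bool

/-- An event order: events at strictly increasing times, tending to infinity. -/
structure EventOrder where
  ev : ℕ → Event
  strict : StrictMono fun k => (ev k).time
  unbounded : Filter.Tendsto (fun k => (ev k).time) Filter.atTop Filter.atTop

/-- The legal outcomes `next` for the state of agent `i` when it is activated (and
not deleted) in configuration `c`, on environment `G` with source `s`.  This is
Algorithm 1 together with the entrance rule. -/
def ActOK {V : Type} (G : SimpleGraph V) (s : V) (c : Config ℕ V) (i : ℕ)
    (next : AgentState V) : Prop :=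
  match c i with
  | AgentState.outside =>
      (canEnter c s i ∧ emptyAt c s ∧ next = AgentState.settled s none) ∨
      (canEnter c s i ∧ ¬ emptyAt c s ∧ next = AgentState.mobile s) ∨
      (¬ canEnter c s i ∧ next = AgentState.outside)
  | AgentState.mobile v =>
      (∃ u, G.Adj v u ∧ soleSettledMarking c u v ∧ next = AgentState.mobile u) ∨
      ((¬ ∃ u, G.Adj v u ∧ soleSettledMarking c u v) ∧
        ∃ u, G.Adj v u ∧ emptyAt c u ∧ next = AgentState.settled u (some v)) ∨
      (¬ canMoveFrom G c v ∧ next = AgentState.mobile v)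
  | AgentState.settled v m => next = AgentState.settled v m
  | AgentState.deleted => next = AgentState.deleted

/-- Agent `i` attempts to move when activated in configuration `c`. -/
def AttemptsMove {V : Type} (G : SimpleGraph V) (s : V) (c : Config ℕ V) (i : ℕ) : Prop :=
  match c i with
  | AgentState.outside => canEnter c s i
  | AgentState.mobile v => canMoveFrom G c v
  | AgentState.settled _ _ => False
  | AgentState.deleted => False

/-- A simulation of an event order on the environment `G` with source `s`.
Deletions may occur at any scheduled deletion event (as is allowed when an event
order is simulated on an environment other than the one it arose from). -/
structure Exec (V : Type) (G : SimpleGraph V) (s : V) where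
  S : EventOrder
  cfg : ℕ → Config ℕ V
  init : ∀ i, cfg 0 i = AgentState.outside
  cap : ∀ k, Capacity (cfg k)
  frozen : ∀ k j, j ≠ (S.ev k).agent → cfg (k + 1) j = cfg k j
  act : ∀ k, (S.ev k).isDel = false →
    ActOK G s (cfg k) (S.ev k).agent (cfg (k + 1) (S.ev k).agent)
  del : ∀ k, (S.ev k).isDel = true → cfg (k + 1) (S.ev k).agent = AgentState.deleted

/-- An execution that could arise on the environment `G` itself: agents are
deleted only when activated and attempting to move. -/
structure ExecG (V : Type) (G : SimpleGraph V) (s : V) extends Exec V G s where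
  delLegal : ∀ k, (S.ev k).isDel = true → AttemptsMove G s (cfg k) (S.ev k).agent

/-- Agent `i` performs a successful move at step `k` (entering the source counts). -/
def movedAt {V : Type} {G : SimpleGraph V} {s : V} (E : Exec V G s) (i k : ℕ) : Prop :=
  ∃ v : V, (E.cfg (k + 1) i).pos = some v ∧ (E.cfg k i).pos ≠ some v

/-- The depth of agent `i` at step `k`: the number of successful moves made before `k`. -/
noncomputable def depth {V : Type} {G : SimpleGraph V} {s : V} (E : Exec V G s)
    (i k : ℕ) : ℕ :=
  Set.ncard {j | j < k ∧ movedAt E i j}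

/-- Slow vertices, relative to a parent function `par` describing the tree.
A vertex becomes slow when a mobile agent on it is activated and finds no vertex
it can move to, while all its descendants in the tree are already slow;
slowness persists forever. -/
inductive SlowVtx {V : Type} (G : SimpleGraph V) (s : V) (par : V → Option V)
    (E : Exec V G s) : ℕ → V → Prop
  | trigger (k : ℕ) (v : V) :
      (E.S.ev k).isDel = false →
      E.cfg k ((E.S.ev k).agent) = AgentState.mobile v →
      ¬ canMoveFrom G (E.cfg k) v →
      (∀ u, par u = some v → SlowVtx G s par E k u) →
      SlowVtx G s par E (k + 1) v
  | persist (k : ℕ) (v : V) : SlowVtx G s par E k v → SlowVtx G s par E (k + 1) v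

/-- Iterated parent map. -/
def parIter {V : Type} (par : V → Option V) : ℕ → V → Option V
  | 0, v => some v
  | m + 1, v => (par v).bind (parIter par m)

/-- A spanning tree of `G` rooted at `s`, given by a parent function. -/
structure SpanningTreeOn (V : Type) (G : SimpleGraph V) (s : V) where
  par : V → Option V
  root_iff : ∀ v, par v = none ↔ v = s
  adj : ∀ v u, par v = some u → G.Adj v u
  reach : ∀ v, ∃ m, parIter par m v = some s

/-- The marks of settled agents follow the tree `T` (so `G(t) ⊆ T` at all times). -/
def MarksFollow {V : Type} {G : SimpleGraph V} {s : V} (E : Exec V G s)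
    (T : SpanningTreeOn V G s) : Prop :=
  ∀ k i v m, E.cfg k i = AgentState.settled v m → T.par v = m

/-- Agents traverse only edges of the tree `T`, moving from parent to child
(entering the environment only at the root `s`). -/
def MovesOnTree {V : Type} {G : SimpleGraph V} {s : V} (E : Exec V G s)
    (T : SpanningTreeOn V G s) : Prop :=
  ∀ k i u, (E.cfg k i).pos ≠ some u → (E.cfg (k + 1) i).pos = some u →
    (u = s ∧ E.cfg k i = AgentState.outside) ∨
    (∃ v, (E.cfg k i).pos = some v ∧ T.par u = some v)

/-- Agent `i` is slow at step `k` (it occupies a slow vertex). -/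
def AgentSlow {V : Type} {G : SimpleGraph V} {s : V} (par : V → Option V)
    (E : Exec V G s) (k i : ℕ) : Prop :=
  ∃ v, (E.cfg k i).pos = some v ∧ SlowVtx G s par E k v

/-- Agent `i` is settled at step `k`. -/
def AgentSettled {V : Type} {G : SimpleGraph V} {s : V} (E : Exec V G s) (k i : ℕ) : Prop :=
  ∃ v m, E.cfg k i = AgentState.settled v m

/-- Parent function of the path graph `P(n)`: `v_0` is the root and the parent of
`v_{i+1}` is `v_i`. -/
def pathPar (n : ℕ) : Fin n → Option (Fin n) := fun v =>
  if _ : (v : ℕ) = 0 then none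
  else some ⟨(v : ℕ) - 1, lt_of_le_of_lt (Nat.sub_le _ _) v.isLt⟩

/-- The one-sided infinite path `P(∞)` on `ℕ`. -/
def pathInf : SimpleGraph ℕ := SimpleGraph.fromRel (fun a b => b = a + 1)

/-- Parent function of `P(∞)`, rooted at `0`. -/
def pathInfPar : ℕ → Option ℕ := fun v => if v = 0 then none else some (v - 1)

/-- The meaningful event times of an event order: `idx m` is the index of the
event `t_m`, the first event after `t_{m-1}` at which one of the agents
`A_1, …, A_{m+1}` (indices `0, …, m`) acts. -/
structure MeaningfulTimes (S : EventOrder) where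
  idx : ℕ → ℕ
  mono : StrictMono idx
  agent_le : ∀ m, (S.ev (idx m)).agent ≤ m
  first0 : ∀ k < idx 0, (S.ev k).agent ≠ 0
  least : ∀ m k, idx m < k → k < idx (m + 1) → ¬ ((S.ev k).agent ≤ m + 1)

/-- The directed graph of settled agents and their marks is a tree rooted at `s`:
`s` is settled; an agent has no mark exactly when it sits at `s`; marks point along
edges of `G` to settled vertices; and every settled vertex reaches `s` by a chain
of marks. -/
def IsMarkTree {V : Type} (G : SimpleGraph V) (s : V) (c : Config ℕ V) : Prop :=
  settledAt c s ∧
  (∀ i v m, c i = AgentState.settled v m → (m = none ↔ v = s)) ∧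
  (∀ i v u, c i = AgentState.settled v (some u) → G.Adj v u ∧ settledAt c u) ∧
  (∀ v, settledAt c v →
    ∃ (m : ℕ) (f : ℕ → V), f 0 = v ∧ f m = s ∧
      ∀ j < m, ∃ i, c i = AgentState.settled (f j) (some (f (j + 1))))

/-- The first step (as an extended natural) at which a predicate holds. -/
noncomputable def firstStep (P : ℕ → Prop) : ℕ∞ :=
  sInf {m : ℕ∞ | ∃ k : ℕ, m = (k : ℕ∞) ∧ P k}

/-- The number of events of `S` occurring before (real) time `t`; since event times
are strictly increasing, the configuration at time `t` is `cfg (stepsBefore S t)`. -/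
noncomputable def stepsBefore (S : EventOrder) (t : ℝ) : ℕ :=
  Set.ncard {k | (S.ev k).time < t}

/-- Statement (a): every non-deleted agent whose copy in `G` is neither slow nor
settled has depth in `G` at least its depth in `P(n)`. -/
def StmtA {V : Type} {G : SimpleGraph V} {s : V} (n : ℕ) (hn : 0 < n)
    (EG : Exec V G s) (TG : SpanningTreeOn V G s)
    (EP : Exec (Fin n) (SimpleGraph.pathGraph n) ⟨0, hn⟩) (k : ℕ) : Prop :=
  ∀ i, EG.cfg k i ≠ AgentState.deleted →
    ¬ (AgentSlow TG.par EG k i ∨ AgentSettled EG k i) →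
    depth EP i k ≤ depth EG i k

/-- Statement (b): for every non-deleted agent, if its copy in `P(n)` is slow or
settled then its copy in `G` is slow or settled, and its depth in `G` is at most
its depth in `P(n)`. -/
def StmtB {V : Type} {G : SimpleGraph V} {s : V} (n : ℕ) (hn : 0 < n)
    (EG : Exec V G s) (TG : SpanningTreeOn V G s)
    (EP : Exec (Fin n) (SimpleGraph.pathGraph n) ⟨0, hn⟩) (k : ℕ) : Prop :=
  ∀ i, EG.cfg k i ≠ AgentState.deleted →
    (AgentSlow (pathPar n) EP k i ∨ AgentSettled EP k i) →
    ((AgentSlow TG.par EG k i ∨ AgentSettled EG k i) ∧ depth EG i k ≤ depth EP i k)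

-- helpers test
section Helpers
variable {V : Type} {G : SimpleGraph V} {s : V} {c : Config ℕ V} {i : ℕ} {next : AgentState V}

lemma actOK_settled {v m} (h : c i = AgentState.settled v m) :
    ActOK G s c i next ↔ next = AgentState.settled v m := by
  unfold ActOK; rw [h]

lemma actOK_mobile {v} (h : c i = AgentState.mobile v) :
    ActOK G s c i next ↔
      ((∃ u, G.Adj v u ∧ soleSettledMarking c u v ∧ next = AgentState.mobile u) ∨
      ((¬ ∃ u, G.Adj v u ∧ soleSettledMarking c u v) ∧
        ∃ u, G.Adj v u ∧ emptyAt c u ∧ next = AgentState.settled u (some v)) ∨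
      (¬ canMoveFrom G c v ∧ next = AgentState.mobile v)) := by
  unfold ActOK; rw [h]

lemma actOK_outside (h : c i = AgentState.outside) :
    ActOK G s c i next ↔
      ((canEnter c s i ∧ emptyAt c s ∧ next = AgentState.settled s none) ∨
      (canEnter c s i ∧ ¬ emptyAt c s ∧ next = AgentState.mobile s) ∨
      (¬ canEnter c s i ∧ next = AgentState.outside)) := by
  unfold ActOK; rw [h]

lemma actOK_deleted (h : c i = AgentState.deleted) :
    ActOK G s c i next ↔ next = AgentState.deleted := by
  unfold ActOK; rw [h]

lemma attempts_settled {v m} (h : c i = AgentState.settled v m) :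
    ¬ AttemptsMove G s c i := by
  unfold AttemptsMove; rw [h]; exact id

lemma attempts_deleted (h : c i = AgentState.deleted) :
    ¬ AttemptsMove G s c i := by
  unfold AttemptsMove; rw [h]; exact id

lemma attempts_mobile {v} (h : c i = AgentState.mobile v) :
    AttemptsMove G s c i ↔ canMoveFrom G c v := by
  unfold AttemptsMove; rw [h]

lemma attempts_outside (h : c i = AgentState.outside) :
    AttemptsMove G s c i ↔ canEnter c s i := by
  unfold AttemptsMove; rw [h]

end Helpers
section Slow
variable {V : Type} {G : SimpleGraph V} {s : V} {E : Exec V G s} {par : V → Option V}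

lemma slowVtx_mono {k j : ℕ} {v : V} (h : SlowVtx G s par E k v) (hkj : k ≤ j) :
    SlowVtx G s par E j v := by
  induction j with
  | zero => exact (Nat.le_zero.mp hkj) ▸ h
  | succ j ih =>
    rcases Nat.lt_or_ge k (j+1) with h1 | h1
    · exact SlowVtx.persist j v (ih (Nat.lt_succ_iff.mp h1))
    · exact (Nat.le_antisymm hkj h1) ▸ h

lemma childSlow {k : ℕ} {v : V} (h : SlowVtx G s par E k v) :
    ∀ u, par u = some v → SlowVtx G s par E k u := by
  induction h with
  | trigger k v hdel hcfg hncm hch => exact fun u hu => SlowVtx.persist _ _ (hch u hu)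
  | persist k v h ih => exact fun u hu => SlowVtx.persist _ _ (ih u hu)

/-- If a mobile agent sits at `v` and cannot move at step `k`, and the event at `k`
does not delete it, then it is still mobile at `v` at step `k+1`. -/
lemma mobStay {k : ℕ} {v : V} {q : ℕ} (hq : E.cfg k q = AgentState.mobile v)
    (hcm : ¬ canMoveFrom G (E.cfg k) v)
    (hnd : (E.S.ev k).isDel = true → (E.S.ev k).agent = q → False) :
    E.cfg (k+1) q = AgentState.mobile v := by
  by_cases hag : q = (E.S.ev k).agent
  · subst hag
    rcases Bool.eq_false_or_eq_true (E.S.ev k).isDel with hd | hd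
    · exact absurd rfl (hnd hd)
    · have hact := E.act k hd
      rw [actOK_mobile hq] at hact
      rcases hact with ⟨u, hadj, hsole, _⟩ | ⟨_, u, hadj, hemp, _⟩ | ⟨_, hnext⟩
      · exact absurd ⟨u, hadj, Or.inl hsole⟩ hcm
      · exact absurd ⟨u, hadj, Or.inr hemp⟩ hcm
      · exact hnext
  · exact (E.frozen k q (fun h => hag h)).trans hq

/-- The generic slow-vertex invariant. -/
lemma slowInv {N : ℕ}
    (h1 : ∀ k ≤ N, ∀ i v mk, E.cfg k i = AgentState.settled v mk → par v = mk)
    (h2 : ∀ k ≤ N, ∀ i v, E.cfg k i = AgentState.mobile v → settledAt (E.cfg k) v)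
    (h3 : ∀ k < N, ∀ i v mk, E.cfg k i = AgentState.settled v mk →
        E.cfg (k+1) i = AgentState.settled v mk)
    (h4 : ∀ k < N, (E.S.ev k).isDel = true → ∀ v,
        E.cfg k (E.S.ev k).agent = AgentState.mobile v → SlowVtx G s par E k v →
        ¬ canMoveFrom G (E.cfg k) v → False) :
    ∀ k ≤ N, ∀ v, SlowVtx G s par E k v →
      mobileAt (E.cfg k) v ∧ ¬ canMoveFrom G (E.cfg k) v := by
  intro k
  induction k with
  | zero => intro _ v h; exact absurd h (by intro h; cases h)
  | succ k ih =>
    intro hkN v hs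
    have hkN' : k < N := hkN
    have hkN'' : k ≤ N := Nat.le_of_lt hkN'
    -- extract data at step k
    have key : mobileAt (E.cfg k) v ∧ ¬ canMoveFrom G (E.cfg k) v ∧
        (∀ u, par u = some v → SlowVtx G s par E k u) ∧
        ((E.S.ev k).isDel = true → (E.cfg k (E.S.ev k).agent = AgentState.mobile v → False)) := by
      cases hs with
      | trigger k v hdel hcfg hncm hch =>
        exact ⟨⟨_, hcfg⟩, hncm, hch, fun hd _ => by rw [hdel] at hd; cases hd⟩
      | persist k v h =>
        obtain ⟨hm, hcm⟩ := ih hkN'' v h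
        exact ⟨hm, hcm, childSlow h, fun hd hmv => h4 k hkN' hd v hmv h hcm⟩
    obtain ⟨⟨q, hq⟩, hcm, hch, hnodel⟩ := key
    constructor
    · exact ⟨q, mobStay hq hcm (fun hd ha => hnodel hd (ha ▸ hq))⟩
    · rintro ⟨u, hadj, hor⟩
      have hne : ¬ (soleSettledMarking (E.cfg k) u v ∨ emptyAt (E.cfg k) u) :=
        fun h => hcm ⟨u, hadj, h⟩
      rcases hor with ⟨⟨j1, hj1⟩, hnomob⟩ | hemp
      · -- sole settled marking u v at k+1
        have hj1k : E.cfg k j1 = AgentState.settled u (some v) := by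
          by_cases hag : j1 = (E.S.ev k).agent
          · subst hag
            rcases Bool.eq_false_or_eq_true (E.S.ev k).isDel with hd | hd
            · have := E.del k hd
              rw [this] at hj1; cases hj1
            · have hact := E.act k hd
              cases hst : E.cfg k (E.S.ev k).agent with
              | outside =>
                rw [actOK_outside hst] at hact
                rcases hact with ⟨_, _, hnext⟩ | ⟨_, _, hnext⟩ | ⟨_, hnext⟩ <;>
                  rw [hnext] at hj1 <;> cases hj1
              | mobile w =>
                rw [actOK_mobile hst] at hact
                rcases hact with ⟨u', _, _, hnext⟩ | ⟨_, u', hadj', hemp', hnext⟩ | ⟨_, hnext⟩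
                · rw [hnext] at hj1; cases hj1
                · rw [hnext] at hj1
                  injection hj1 with h1 h2
                  exact absurd (Or.inr (h1 ▸ hemp')) hne
                · rw [hnext] at hj1; cases hj1
              | settled w mk =>
                rw [actOK_settled hst] at hact
                rw [hact] at hj1; exact hj1
              | deleted =>
                rw [actOK_deleted hst] at hact
                rw [hact] at hj1; cases hj1
          · exact (E.frozen k j1 hag).symm.trans hj1
        have hpar : par u = some v := h1 k hkN'' j1 u (some v) hj1k
        have hsu : SlowVtx G s par E k u := hch u hpar
        obtain ⟨hmu, hcmu⟩ := ih hkN'' u hsu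
        obtain ⟨q', hq'⟩ := hmu
        exact hnomob ⟨q', mobStay hq' hcmu
          (fun hd ha => h4 k hkN' hd u (ha ▸ hq') hsu hcmu)⟩
      · -- empty at k+1
        have hset : settledAt (E.cfg k) u := by
          have hne' : ¬ emptyAt (E.cfg k) u := fun h => hne (Or.inr h)
          unfold emptyAt at hne'
          rcases not_and_or.mp hne' with h | h
          · exact not_not.mp h
          · obtain ⟨j2, hj2⟩ := not_not.mp h
            exact h2 k hkN'' j2 u hj2
        obtain ⟨j0, mk0, hj0⟩ := hset
        exact hemp.1 ⟨j0, mk0, h3 k hkN' j0 u mk0 hj0⟩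
end Slow
section EG
variable {V : Type} {G : SimpleGraph V} {s : V} (EG : ExecG V G s)

/-- Settled agents keep their state in an execution on `G` itself. -/
lemma egSettledStep : ∀ k j w mk, EG.cfg k j = AgentState.settled w mk →
    EG.cfg (k+1) j = AgentState.settled w mk := by
  intro k j w mk h
  by_cases hag : j = (EG.S.ev k).agent
  · subst hag
    rcases Bool.eq_false_or_eq_true (EG.S.ev k).isDel with hd | hd
    · exact absurd (EG.delLegal k hd) (attempts_settled h)
    · have hact := EG.act k hd
      rw [actOK_settled h] at hact
      exact hact
  · exact (EG.frozen k j hag).trans h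

/-- Mobile agents sit on settled vertices in an execution on `G` itself. -/
lemma egMos : ∀ k j w, EG.cfg k j = AgentState.mobile w → settledAt (EG.cfg k) w := by
  intro k
  induction k with
  | zero => intro j w h; rw [EG.init j] at h; cases h
  | succ k ih =>
    intro j w h
    have hstep : ∀ u, settledAt (EG.cfg k) u → settledAt (EG.cfg (k+1)) u := by
      rintro u ⟨j0, mk0, hj0⟩
      exact ⟨j0, mk0, egSettledStep EG k j0 u mk0 hj0⟩
    by_cases hag : j = (EG.S.ev k).agent
    · subst hag
      rcases Bool.eq_false_or_eq_true (EG.S.ev k).isDel with hd | hd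
      · rw [EG.del k hd] at h; cases h
      · have hact := EG.act k hd
        cases hst : EG.cfg k (EG.S.ev k).agent with
        | outside =>
          rw [actOK_outside hst] at hact
          rcases hact with ⟨_, _, hnext⟩ | ⟨hce, hne, hnext⟩ | ⟨_, hnext⟩ <;> rw [hnext] at h
          · cases h
          · injection h with h1; subst h1
            apply hstep
            rcases not_and_or.mp hne with h' | h'
            · exact not_not.mp h'
            · exact absurd (not_not.mp h') hce.2
          · cases h
        | mobile v =>
          rw [actOK_mobile hst] at hact
          rcases hact with ⟨u, _, hsole, hnext⟩ | ⟨_, u, _, _, hnext⟩ | ⟨_, hnext⟩ <;>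
            rw [hnext] at h
          · injection h with h1; subst h1
            obtain ⟨⟨j1, hj1⟩, _⟩ := hsole
            exact hstep _ ⟨j1, _, hj1⟩
          · cases h
          · injection h with h1; subst h1
            exact hstep _ (ih _ _ hst)
        | settled v mk =>
          rw [actOK_settled hst] at hact
          rw [hact] at h; cases h
        | deleted =>
          rw [actOK_deleted hst] at hact
          rw [hact] at h; cases h
    · have := (EG.frozen k j hag).symm.trans h
      exact hstep _ (ih _ _ this)

/-- The slow-vertex invariant for the execution on `G`. -/
lemma egSlowInv (TG : SpanningTreeOn V G s) (hmark : MarksFollow EG.toExec TG) : ∀ k v, SlowVtx G s TG.par EG.toExec k v →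
    mobileAt (EG.cfg k) v ∧ ¬ canMoveFrom G (EG.cfg k) v := by
  intro k
  refine slowInv (N := k) (fun k' _ i v mk h => hmark k' i v mk h)
    (fun k' _ j w h => egMos EG k' j w h)
    (fun k' _ j w mk h => egSettledStep EG k' j w mk h) ?_ k le_rfl
  intro k' _ hd v hmv _ hcm
  exact hcm ((attempts_mobile hmv).mp (EG.delLegal k' hd))

/-- A deleted, slow or settled agent in `G` does not attempt to move. -/
lemma egProtNoAttempt (TG : SpanningTreeOn V G s) (hmark : MarksFollow EG.toExec TG) (k j : ℕ)
    (h : EG.cfg k j = AgentState.deleted ∨ AgentSlow TG.par EG.toExec k j ∨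
      AgentSettled EG.toExec k j) :
    ¬ AttemptsMove G s (EG.cfg k) j := by
  rcases h with h | ⟨v, hpos, hslow⟩ | ⟨v, mk, h⟩
  · exact attempts_deleted h
  · cases hst : EG.cfg k j with
    | outside => rw [hst] at hpos; cases hpos
    | mobile w =>
      rw [hst] at hpos
      simp only [AgentState.pos, Option.some.injEq] at hpos
      subst hpos
      rw [attempts_mobile hst]
      exact (egSlowInv EG TG hmark k w hslow).2
    | settled w mk => exact attempts_settled hst
    | deleted => exact attempts_deleted hst
  · exact attempts_settled h

end EG
section Sched
variable {V : Type} {G : SimpleGraph V} {s : V}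

lemma classify {S : EventOrder} (M : MeaningfulTimes S) (k : ℕ) :
    k < M.idx 0 ∨ (∃ m', M.idx m' = k) ∨
    (∃ m', M.idx m' < k ∧ k < M.idx (m'+1)) := by
  by_cases h0 : k < M.idx 0
  · exact Or.inl h0
  · push_neg at h0
    have hP : M.idx (Nat.findGreatest (fun j => M.idx j ≤ k) k) ≤ k :=
      Nat.findGreatest_spec (P := fun j => M.idx j ≤ k) (Nat.zero_le k) h0
    set m' := Nat.findGreatest (fun j => M.idx j ≤ k) k with hm'
    have hlt : k < M.idx (m' + 1) := by
      by_contra hc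
      push_neg at hc
      have hle : m' + 1 ≤ k := le_trans (M.mono.le_apply) hc
      exact Nat.findGreatest_is_greatest (P := fun j => M.idx j ≤ k)
        (Nat.lt_succ_self m') hle hc
    rcases eq_or_lt_of_le hP with he | hlt'
    · exact Or.inr (Or.inl ⟨m', he⟩)
    · exact Or.inr (Or.inr ⟨m', hlt', hlt⟩)

/-- No agent is inside either environment at or before its own meaningful time. -/
lemma order {n : ℕ} {hn : 0 < n} (EG : ExecG V G s)
    (EP : Exec (Fin n) (SimpleGraph.pathGraph n) ⟨0, hn⟩)
    (hS : EP.S = EG.S) (M : MeaningfulTimes EG.S) :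
    ∀ k p, k ≤ M.idx p →
      EG.cfg k p = AgentState.outside ∧ EP.cfg k p = AgentState.outside := by
  intro k
  induction k with
  | zero => exact fun p _ => ⟨EG.init p, EP.init p⟩
  | succ k ih =>
    intro p hk
    have hk' : k ≤ M.idx p := Nat.le_of_succ_le hk
    have hEPev : EP.S.ev k = EG.S.ev k := by rw [hS]
    by_cases hag : p = (EG.S.ev k).agent
    · have hout := ih p hk'
      have hprev : 1 ≤ p ∧ EG.cfg k (p-1) = AgentState.outside ∧
          EP.cfg k (p-1) = AgentState.outside := by
        rcases classify M k with hc | ⟨m'', hc⟩ | ⟨m'', hc1, hc2⟩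
        · have hp0 : p ≠ 0 := fun h => M.first0 k hc (by rw [← hag, h])
          have hp1 : 1 ≤ p := Nat.one_le_iff_ne_zero.mpr hp0
          exact ⟨hp1, ih (p-1) (le_of_lt (lt_of_lt_of_le hc
            (M.mono.monotone (Nat.zero_le (p-1)))))⟩
        · exfalso
          have h1 : p ≤ m'' := by rw [hag, ← hc]; exact M.agent_le m''
          have h2 : M.idx m'' < M.idx p := lt_of_lt_of_le (hc ▸ Nat.lt_succ_self k) hk
          exact absurd (M.mono.lt_iff_lt.mp h2) (Nat.not_lt.mpr h1)
        · have hge : ¬ ((EG.S.ev k).agent ≤ m'' + 1) := M.least m'' k hc1 hc2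
          have hp : m'' + 2 ≤ p := by omega
          have hp1 : 1 ≤ p := by omega
          refine ⟨hp1, ih (p-1) (le_of_lt (lt_of_lt_of_le hc2
            (M.mono.monotone (by omega))))⟩
      obtain ⟨hp1, hpg, hpp⟩ := hprev
      have hceG : ¬ canEnter (EG.cfg k) s p := fun h =>
        (h.1 (p-1) (by omega)) hpg
      have hceP : ¬ canEnter (EP.cfg k) ⟨0, hn⟩ p := fun h =>
        (h.1 (p-1) (by omega)) hpp
      have hd : (EG.S.ev k).isDel = false := by
        rcases Bool.eq_false_or_eq_true (EG.S.ev k).isDel with hd | hd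
        case inr => exact hd
        · exfalso
          have := EG.delLegal k hd
          rw [← hag] at this
          exact hceG ((attempts_outside hout.1).mp this)
      constructor
      · have hact := EG.act k hd
        rw [← hag] at hact
        rw [actOK_outside hout.1] at hact
        rcases hact with ⟨h', _, _⟩ | ⟨h', _, _⟩ | ⟨_, hnext⟩
        · exact absurd h' hceG
        · exact absurd h' hceG
        · exact hnext
      · have hact := EP.act k (by rw [hEPev]; exact hd)
        rw [hEPev, ← hag] at hact
        rw [actOK_outside hout.2] at hact
        rcases hact with ⟨h', _, _⟩ | ⟨h', _, _⟩ | ⟨_, hnext⟩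
        · exact absurd h' hceP
        · exact absurd h' hceP
        · exact hnext
    · have h := ih p hk'
      refine ⟨(EG.frozen k p hag).trans h.1, ?_⟩
      have hq : (EP.S.ev k).agent = (EG.S.ev k).agent := by rw [hS]
      exact (EP.frozen k p (fun hh => hag (hh.trans hq))).trans h.2
end Sched
section PathPar
variable {n : ℕ}

lemma pathPar_none {hn : 0 < n} : pathPar n ⟨0, hn⟩ = none := by
  unfold pathPar; simp

lemma pathPar_succ {u v : Fin n} (h : (u : ℕ) = (v : ℕ) + 1) : pathPar n u = some v := by
  unfold pathPar
  rw [dif_neg (by omega)]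
  congr 1
  apply Fin.ext
  simp [h]

lemma pathPar_some {u w' : Fin n} (h : pathPar n u = some w') : (w' : ℕ) + 1 = (u : ℕ) := by
  unfold pathPar at h
  by_cases h0 : (u : ℕ) = 0
  · rw [dif_pos h0] at h; cases h
  · rw [dif_neg h0] at h
    injection h with h
    have : (w' : ℕ) = (u : ℕ) - 1 := by rw [← h]
    omega
end PathPar

section EP
variable {V : Type} {G : SimpleGraph V} {s : V} {n : ℕ} {hn : 0 < n}
  (EG : ExecG V G s) (TG : SpanningTreeOn V G s) (hmark : MarksFollow EG.toExec TG)
  (EP : Exec (Fin n) (SimpleGraph.pathGraph n) ⟨0, hn⟩)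
  (hS : EP.S = EG.S) (M : MeaningfulTimes EG.S) (m : ℕ)
  (hb : ∀ m' ≤ m, StmtB n hn EG.toExec TG EP (M.idx m'))

include hS hmark hb in
/-- Deletion events of `S` never hit an agent that is settled or slow in `P(n)`,
before time `t_m`. -/
lemma epNoDel : ∀ k ≤ M.idx m, (EG.S.ev k).isDel = true →
    ∀ j, j = (EG.S.ev k).agent →
    (AgentSlow (pathPar n) EP k j ∨ AgentSettled EP k j) → False := by
  intro k hkm hd j hag hprot
  have hne_out : EP.cfg k j ≠ AgentState.outside := by
    rcases hprot with ⟨v, hpos, _⟩ | ⟨w, mk, h⟩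
    · intro h; rw [h] at hpos; cases hpos
    · rw [h]; intro h'; cases h'
  rcases classify M k with hc | ⟨m', hc⟩ | ⟨m'', hc1, hc2⟩
  · exact hne_out (order EG EP hS M k j (le_of_lt (lt_of_lt_of_le hc
      (M.mono.monotone (Nat.zero_le j))))).2
  · have hm' : m' ≤ m := M.mono.le_iff_le.mp (hc ▸ hkm)
    subst hc
    by_cases hdel : EG.cfg (M.idx m') j = AgentState.deleted
    · exact attempts_deleted hdel (hag ▸ EG.delLegal _ hd)
    · have hB := hb m' hm' j hdel hprot
      exact egProtNoAttempt EG TG hmark _ j (Or.inr hB.1) (hag ▸ EG.delLegal _ hd)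
  · have hge : ¬ ((EG.S.ev k).agent ≤ m'' + 1) := M.least m'' k hc1 hc2
    have : k ≤ M.idx j := le_of_lt (lt_of_lt_of_le hc2 (M.mono.monotone (by omega)))
    exact hne_out (order EG EP hS M k j this).2

include hS hmark hb in
/-- Settled agents of `P(n)` keep their state before time `t_m`. -/
lemma epSettledStep : ∀ k < M.idx m, ∀ j w mk, EP.cfg k j = AgentState.settled w mk →
    EP.cfg (k+1) j = AgentState.settled w mk := by
  intro k hkm j w mk h
  have hEPev : EP.S.ev k = EG.S.ev k := by rw [hS]
  by_cases hag : j = (EP.S.ev k).agent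
  · rcases Bool.eq_false_or_eq_true (EP.S.ev k).isDel with hd | hd
    · exact absurd (epNoDel EG TG hmark EP hS M m hb k (le_of_lt hkm) (hEPev ▸ hd) j
        (hEPev ▸ hag) (Or.inr ⟨w, mk, h⟩)) not_false
    · have hact := EP.act k hd
      rw [← hag, actOK_settled h] at hact
      exact hact
  · exact (EP.frozen k j hag).trans h
end EP
section EPPhi
variable {V : Type} {G : SimpleGraph V} {s : V} {n : ℕ} {hn : 0 < n}
  (EG : ExecG V G s) (TG : SpanningTreeOn V G s) (hmark : MarksFollow EG.toExec TG)
  (EP : Exec (Fin n) (SimpleGraph.pathGraph n) ⟨0, hn⟩)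
  (hS : EP.S = EG.S) (M : MeaningfulTimes EG.S) (m : ℕ)
  (hb : ∀ m' ≤ m, StmtB n hn EG.toExec TG EP (M.idx m'))

include hS hmark hb in
/-- The structural invariants of the simulation on `P(n)`, up to time `t_m`:
marks follow `pathPar`, mobile agents sit on settled vertices, and the parent of
a vertex holding a mobile agent is settled. -/
lemma epPhi : ∀ k ≤ M.idx m,
    (∀ j w mk, EP.cfg k j = AgentState.settled w mk → pathPar n w = mk) ∧
    (∀ j w, EP.cfg k j = AgentState.mobile w → settledAt (EP.cfg k) w) ∧
    (∀ j w, EP.cfg k j = AgentState.mobile w → ∀ w', pathPar n w = some w' →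
      settledAt (EP.cfg k) w') := by
  intro k
  induction k with
  | zero =>
    refine fun _ => ⟨fun j w mk h => ?_, fun j w h => ?_, fun j w h => ?_⟩ <;>
      rw [EP.init j] at h <;> cases h
  | succ k ih =>
    intro hk
    have hkm : k < M.idx m := hk
    obtain ⟨P1, P2, P3⟩ := ih (Nat.le_of_lt hkm)
    have hstep : ∀ u, settledAt (EP.cfg k) u → settledAt (EP.cfg (k+1)) u := by
      rintro u ⟨j0, mk0, hj0⟩
      exact ⟨j0, mk0, epSettledStep EG TG hmark EP hS M m hb k hkm j0 u mk0 hj0⟩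
    -- characterize the state of any agent at k+1
    have hchar : ∀ j, EP.cfg (k+1) j = EP.cfg k j ∨
        EP.cfg (k+1) j = AgentState.deleted ∨
        ((EP.S.ev k).isDel = false ∧ j = (EP.S.ev k).agent ∧
          ActOK (SimpleGraph.pathGraph n) ⟨0, hn⟩ (EP.cfg k) j (EP.cfg (k+1) j)) := by
      intro j
      by_cases hag : j = (EP.S.ev k).agent
      · rcases Bool.eq_false_or_eq_true (EP.S.ev k).isDel with hd | hd
        · exact Or.inr (Or.inl (hag ▸ EP.del k hd))
        · exact Or.inr (Or.inr ⟨hd, hag, hag ▸ EP.act k hd⟩)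
      · exact Or.inl (EP.frozen k j hag)
    refine ⟨?_, ?_, ?_⟩
    · -- P1 at k+1
      intro j w mk h
      rcases hchar j with hc | hc | ⟨hd, hag, hact⟩
      · exact P1 j w mk (hc.symm.trans h)
      · rw [h] at hc; cases hc
      · cases hst : EP.cfg k j with
        | outside =>
          rw [actOK_outside hst] at hact
          rcases hact with ⟨_, _, hnext⟩ | ⟨_, _, hnext⟩ | ⟨_, hnext⟩ <;>
            rw [hnext] at h
          · injection h with h1 h2; rw [← h1, ← h2]; exact pathPar_none
          · cases h
          · cases h
        | mobile v =>
          rw [actOK_mobile hst] at hact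
          rcases hact with ⟨u, _, _, hnext⟩ | ⟨_, u, hadj, hemp, hnext⟩ | ⟨_, hnext⟩ <;>
            rw [hnext] at h
          · cases h
          · injection h with h1 h2
            rw [← h1, ← h2]
            rcases SimpleGraph.pathGraph_adj.mp hadj with ha | ha
            · exact pathPar_succ ha.symm
            · exact absurd (P3 j v hst u (pathPar_succ ha.symm)) hemp.1
          · cases h
        | settled w' mk' =>
          rw [actOK_settled hst] at hact
          rw [hact] at h
          injection h with h1 h2
          rw [← h1, ← h2]
          exact P1 j w' mk' hst
        | deleted =>
          rw [actOK_deleted hst] at hact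
          rw [hact] at h; cases h
    · -- P2 at k+1
      intro j w h
      rcases hchar j with hc | hc | ⟨hd, hag, hact⟩
      · exact hstep w (P2 j w (hc.symm.trans h))
      · rw [h] at hc; cases hc
      · cases hst : EP.cfg k j with
        | outside =>
          rw [actOK_outside hst] at hact
          rcases hact with ⟨_, _, hnext⟩ | ⟨hce, hne, hnext⟩ | ⟨_, hnext⟩ <;>
            rw [hnext] at h
          · cases h
          · injection h with h1; subst h1
            apply hstep
            rcases not_and_or.mp hne with h' | h'
            · exact not_not.mp h'
            · exact absurd (not_not.mp h') hce.2
          · cases h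
        | mobile v =>
          rw [actOK_mobile hst] at hact
          rcases hact with ⟨u, _, hsole, hnext⟩ | ⟨_, u, _, _, hnext⟩ | ⟨_, hnext⟩ <;>
            rw [hnext] at h
          · injection h with h1; subst h1
            obtain ⟨⟨j1, hj1⟩, _⟩ := hsole
            exact hstep _ ⟨j1, _, hj1⟩
          · cases h
          · injection h with h1; subst h1
            exact hstep _ (P2 j _ hst)
        | settled w' mk' =>
          rw [actOK_settled hst] at hact
          rw [hact] at h; cases h
        | deleted =>
          rw [actOK_deleted hst] at hact
          rw [hact] at h; cases h
    · -- P3 at k+1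
      intro j w h w' hw'
      rcases hchar j with hc | hc | ⟨hd, hag, hact⟩
      · exact hstep w' (P3 j w (hc.symm.trans h) w' hw')
      · rw [h] at hc; cases hc
      · cases hst : EP.cfg k j with
        | outside =>
          rw [actOK_outside hst] at hact
          rcases hact with ⟨_, _, hnext⟩ | ⟨hce, hne, hnext⟩ | ⟨_, hnext⟩ <;>
            rw [hnext] at h
          · cases h
          · injection h with h1; subst h1
            rw [pathPar_none] at hw'; cases hw'
          · cases h
        | mobile v =>
          rw [actOK_mobile hst] at hact
          rcases hact with ⟨u, _, hsole, hnext⟩ | ⟨_, u, _, _, hnext⟩ | ⟨_, hnext⟩ <;>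
            rw [hnext] at h
          · injection h with h1
            obtain ⟨⟨j1, hj1⟩, _⟩ := hsole
            have hpu : pathPar n u = some v := P1 j1 u (some v) hj1
            rw [← h1, hpu] at hw'
            injection hw' with hw2
            rw [← hw2]
            exact hstep _ (P2 j v hst)
          · cases h
          · injection h with h1; subst h1
            exact hstep _ (P3 j _ hst w' hw')
        | settled w'' mk' =>
          rw [actOK_settled hst] at hact
          rw [hact] at h; cases h
        | deleted =>
          rw [actOK_deleted hst] at hact
          rw [hact] at h; cases h
end EPPhi
section Final
variable {V : Type} {G : SimpleGraph V} {s : V} {n : ℕ} {hn : 0 < n}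
  (EG : ExecG V G s) (TG : SpanningTreeOn V G s) (hmark : MarksFollow EG.toExec TG)
  (EP : Exec (Fin n) (SimpleGraph.pathGraph n) ⟨0, hn⟩)
  (hS : EP.S = EG.S) (M : MeaningfulTimes EG.S) (m : ℕ)
  (hb : ∀ m' ≤ m, StmtB n hn EG.toExec TG EP (M.idx m'))

include hS hmark hb in
/-- The slow-vertex invariant for the simulation on `P(n)`, up to time `t_m`. -/
lemma epSlowInv : ∀ k ≤ M.idx m, ∀ v,
    SlowVtx (SimpleGraph.pathGraph n) ⟨0, hn⟩ (pathPar n) EP k v →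
    mobileAt (EP.cfg k) v ∧ ¬ canMoveFrom (SimpleGraph.pathGraph n) (EP.cfg k) v := by
  refine slowInv (N := M.idx m) ?_ ?_ ?_ ?_
  · exact fun k hk i v mk h => (epPhi EG TG hmark EP hS M m hb k hk).1 i v mk h
  · exact fun k hk i v h => (epPhi EG TG hmark EP hS M m hb k hk).2.1 i v h
  · exact fun k hk j w mk h => epSettledStep EG TG hmark EP hS M m hb k hk j w mk h
  · intro k hk hd v hmv hslow _
    have hEPev : EP.S.ev k = EG.S.ev k := by rw [hS]
    refine epNoDel EG TG hmark EP hS M m hb k (le_of_lt hk) (hEPev ▸ hd)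
      ((EP.S.ev k).agent) (by rw [hEPev]) (Or.inl ⟨v, by rw [hmv]; rfl, hslow⟩)
end Final


/-- Lemma 4 of the paper. If statement (b) is true at all
meaningful event times up to `t_m`, then no agent of `P(n)` that is settled or
slow at `t_m` moves or is deleted as a result of the event scheduled for `t_m`:
such agents are in the same state at time `t_{m+1}`. -/
theorem stmt3 {V : Type} [Fintype V] (G : SimpleGraph V) (hG : G.Connected) (s : V)
    (n : ℕ) (hn : 0 < n)
    (EG : ExecG V G s) (TG : SpanningTreeOn V G s)
    (hmark : MarksFollow EG.toExec TG) (hmove : MovesOnTree EG.toExec TG)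
    (EP : Exec (Fin n) (SimpleGraph.pathGraph n) ⟨0, hn⟩) (hS : EP.S = EG.S)
    (M : MeaningfulTimes EG.S) (m : ℕ)
    (hb : ∀ m' ≤ m, StmtB n hn EG.toExec TG EP (M.idx m')) :
    ∀ i, (AgentSlow (pathPar n) EP (M.idx m) i ∨ AgentSettled EP (M.idx m) i) →
      EP.cfg (M.idx (m + 1)) i = EP.cfg (M.idx m) i := by
  intro i hprot
  set K := M.idx m with hK
  have hEPev : ∀ k, EP.S.ev k = EG.S.ev k := fun k => by rw [hS]
  have hne_out : EP.cfg K i ≠ AgentState.outside := by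
    rcases hprot with ⟨v, hpos, _⟩ | ⟨w, mk, h⟩
    · intro h; rw [h] at hpos; cases hpos
    · rw [h]; intro h'; cases h'
  have him : i < m := by
    by_contra hc
    push_neg at hc
    exact hne_out (order EG EP hS M K i (M.mono.monotone hc)).2
  -- the event at time t_m does not affect agent i
  have hstep1 : EP.cfg (K+1) i = EP.cfg K i := by
    by_cases hag : i = (EP.S.ev K).agent
    · rcases Bool.eq_false_or_eq_true (EP.S.ev K).isDel with hd | hd
      · exact absurd (epNoDel EG TG hmark EP hS M m hb K le_rfl (hEPev K ▸ hd) i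
          (hEPev K ▸ hag) hprot) not_false
      · have hact := EP.act K hd
        rw [← hag] at hact
        rcases hprot with ⟨v, hpos, hslow⟩ | ⟨w, mk, hset⟩
        · cases hst : EP.cfg K i with
          | outside => rw [hst] at hpos; cases hpos
          | deleted => rw [hst] at hpos; cases hpos
          | settled w' mk' =>
            rw [actOK_settled hst] at hact
            exact hact
          | mobile w' =>
            rw [hst] at hpos
            simp only [AgentState.pos, Option.some.injEq] at hpos
            subst hpos
            have hcm := (epSlowInv EG TG hmark EP hS M m hb K le_rfl w' hslow).2
            rw [actOK_mobile hst] at hact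
            rcases hact with ⟨u, hadj, hsole, _⟩ | ⟨_, u, hadj, hemp, _⟩ | ⟨_, hnext⟩
            · exact absurd ⟨u, hadj, Or.inl hsole⟩ hcm
            · exact absurd ⟨u, hadj, Or.inr hemp⟩ hcm
            · exact hnext
        · rw [actOK_settled hset] at hact
          exact hact.trans hset.symm
    · exact EP.frozen K i hag
  -- no event strictly between t_m and t_{m+1} affects agent i
  have hrest : ∀ k, K < k → k ≤ M.idx (m+1) → EP.cfg k i = EP.cfg K i := by
    intro k
    induction k with
    | zero => intro h; omega
    | succ k ih =>
      intro hlo hhi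
      rcases Nat.lt_or_ge K k with hlt | hge
      · have hk1 : k < M.idx (m+1) := hhi
        have hgt : ¬ ((EG.S.ev k).agent ≤ m + 1) := M.least m k hlt hk1
        have hag : i ≠ (EP.S.ev k).agent := by
          rw [hEPev k]; intro h; rw [← h] at hgt; omega
        exact (EP.frozen k i hag).trans (ih hlt (le_of_lt hk1))
      · have : k = K := le_antisymm hge (Nat.lt_succ_iff.mp hlo)
        rw [this]; exact hstep1
  exact hrest (M.idx (m+1)) (M.mono (Nat.lt_succ_self m)) le_rfl
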